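/- For every natural number N ≥ 1, the sum over n from 1 to N of q^n/(1-q^n) equals ∑_{n=1}^∞ n q^n (q^{n+1};q)_{N-1} − ∑_{n=1}^∞ n q^{n+N} (q^{n+1};q)_{N-1}, for |q|<1. (Guo–Zeng's finite analogue of Uchimura's identity.) -/

import Mathlib

open Finset Filter

/-- q-Pochhammer symbol (a;q)_n = ∏_{k=0}^{n-1} (1 - a q^k). -/
noncomputable def qP (a q : ℂ) (n : ℕ) : ℂ := ∏ k ∈ Finset.range n, (1 - a * q ^ k)

/-- Gaussian (q-)binomial coefficient [N choose n]_q. -/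
noncomputable def qBinom (q : ℂ) (N n : ℕ) : ℂ := qP q q N / (qP q q n * qP q q (N - n))

lemma qP_zero (a q : ℂ) : qP a q 0 = 1 := by simp [qP]

lemma qP_succ (a q : ℂ) (n : ℕ) : qP a q (n+1) = qP a q n * (1 - a * q ^ n) := by
  simp [qP, Finset.prod_range_succ]

lemma qP_succ' (a q : ℂ) (n : ℕ) : qP a q (n+1) = (1 - a) * qP (a*q) q n := by
  rw [qP, Finset.prod_range_succ']
  rw [qP, mul_comm]
  simp only [pow_zero, mul_one]
  congr 1
  apply Finset.prod_congr rfl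
  intro k _
  ring_nf

lemma norm_qP_le {a q : ℂ} (ha : ‖a‖ ≤ 1) (hq : ‖q‖ ≤ 1) (n : ℕ) : ‖qP a q n‖ ≤ 2 ^ n := by
  induction n with
  | zero => simp [qP_zero]
  | succ n ih =>
    rw [qP_succ, pow_succ]
    have h2 : ‖a * q ^ n‖ ≤ 1 := by
      rw [norm_mul, norm_pow]
      exact mul_le_one₀ ha (pow_nonneg (norm_nonneg _) _)
              (pow_le_one₀ (norm_nonneg _) hq)
    have h1 : ‖(1:ℂ) - a * q ^ n‖ ≤ 2 := by
      calc ‖(1:ℂ) - a * q ^ n‖ ≤ ‖(1:ℂ)‖ + ‖a * q ^ n‖ := norm_sub_le _ _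
        _ ≤ 1 + 1 := by rw [norm_one]; exact add_le_add le_rfl h2
        _ = 2 := by norm_num
    calc ‖qP a q n * (1 - a * q ^ n)‖ = ‖qP a q n‖ * ‖1 - a * q ^ n‖ := norm_mul _ _
      _ ≤ 2 ^ n * 2 := by
          exact mul_le_mul ih h1 (norm_nonneg _) (by positivity)

lemma norm_one_sub_qP_le {a q : ℂ} (ha : ‖a‖ ≤ 1) (hq : ‖q‖ ≤ 1) (n : ℕ) :
    ‖1 - qP a q n‖ ≤ 2 ^ n * ‖a‖ := by
  induction n with
  | zero => simp [qP_zero, norm_nonneg]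
  | succ n ih =>
    have key : 1 - qP a q (n+1) = (1 - qP a q n) + qP a q n * (a * q ^ n) := by
      rw [qP_succ]; ring
    rw [key]
    have h2 : ‖qP a q n * (a * q ^ n)‖ ≤ 2 ^ n * ‖a‖ := by
      rw [norm_mul, norm_mul, norm_pow]
      calc ‖qP a q n‖ * (‖a‖ * ‖q‖ ^ n) ≤ 2 ^ n * (‖a‖ * 1) := by
            apply mul_le_mul (norm_qP_le ha hq n)
            · exact mul_le_mul_of_nonneg_left (pow_le_one₀ (norm_nonneg _) hq) (norm_nonneg _)
            · positivity
            · positivity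
        _ = 2 ^ n * ‖a‖ := by ring
    calc ‖(1 - qP a q n) + qP a q n * (a * q ^ n)‖
        ≤ ‖1 - qP a q n‖ + ‖qP a q n * (a * q ^ n)‖ := norm_add_le _ _
      _ ≤ 2 ^ n * ‖a‖ + 2 ^ n * ‖a‖ := add_le_add ih h2
      _ = 2 ^ (n+1) * ‖a‖ := by ring

lemma qP_ne_zero {a q : ℂ} (ha : ‖a‖ < 1) (hq : ‖q‖ ≤ 1) (n : ℕ) : qP a q n ≠ 0 := by
  rw [qP]
  apply Finset.prod_ne_zero_iff.mpr
  intro k _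
  intro h
  have : (1:ℂ) = a * q ^ k := by linear_combination h
  have h1 : ‖a * q ^ k‖ < 1 := by
    rw [norm_mul, norm_pow]
    calc ‖a‖ * ‖q‖ ^ k ≤ ‖a‖ * 1 :=
          mul_le_mul_of_nonneg_left (pow_le_one₀ (norm_nonneg _) hq) (norm_nonneg _)
      _ = ‖a‖ := by ring
      _ < 1 := ha
  rw [← this] at h1
  simp at h1

lemma one_sub_ne_zero {z : ℂ} (hz : ‖z‖ < 1) : (1:ℂ) - z ≠ 0 := by
  intro h
  have hz1 : z = 1 := by linear_combination -h
  rw [hz1] at hz; simp at hz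

lemma norm_qpow_le {q : ℂ} (hq : ‖q‖ ≤ 1) (m : ℕ) : ‖q ^ m‖ ≤ 1 := by
  rw [norm_pow]; exact pow_le_one₀ (norm_nonneg _) hq

-- S1

lemma summable1 {x q : ℂ} (hx : ‖x‖ < 1) (hq : ‖q‖ < 1) (N : ℕ) (c : ℕ → ℕ) :
    Summable (fun k : ℕ => x ^ (k+1) * qP (q ^ (c k)) q N) := by
  apply Summable.of_norm_bounded (g := fun k : ℕ => (2 ^ N * ‖x‖) * ‖x‖ ^ k)
  · exact (summable_geometric_of_norm_lt_one (x := ‖x‖) (by simpa using hx)).mul_left _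
  · intro k
    rw [norm_mul, norm_pow]
    have h1 : ‖qP (q ^ (c k)) q N‖ ≤ 2 ^ N :=
      norm_qP_le (norm_qpow_le hq.le _) hq.le N
    calc ‖x‖ ^ (k+1) * ‖qP (q ^ (c k)) q N‖ ≤ ‖x‖ ^ (k+1) * 2 ^ N :=
          mul_le_mul_of_nonneg_left h1 (by positivity)
      _ = 2 ^ N * ‖x‖ * ‖x‖ ^ k := by ring

-- S3

lemma summable3 {q : ℂ} (hq : ‖q‖ < 1) (N : ℕ) :
    Summable (fun k : ℕ => 1 - qP (q ^ (k+1)) q N) := by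
  apply Summable.of_norm_bounded (g := fun k : ℕ => (2 ^ N * ‖q‖) * ‖q‖ ^ k)
  · exact (summable_geometric_of_norm_lt_one (x := ‖q‖) (by simpa using hq)).mul_left _
  · intro k
    have h1 : ‖1 - qP (q ^ (k+1)) q N‖ ≤ 2 ^ N * ‖q ^ (k+1)‖ :=
      norm_one_sub_qP_le (norm_qpow_le hq.le _) hq.le N
    calc ‖1 - qP (q ^ (k+1)) q N‖ ≤ 2 ^ N * ‖q ^ (k+1)‖ := h1
      _ = 2 ^ N * ‖q‖ * ‖q‖ ^ k := by rw [norm_pow]; ring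

-- S2

lemma summable2 {q : ℂ} (hq : ‖q‖ < 1) (N : ℕ) :
    Summable (fun n : ℕ => ((n:ℂ) + 1) * q ^ (n+1) * qP (q ^ (n+2)) q N) := by
  have hgeo : Summable (fun n : ℕ => ((n:ℝ) + 1) * ‖q‖ ^ n) := by
    have h1 : Summable (fun n : ℕ => (n:ℝ) ^ 1 * ‖q‖ ^ n) :=
      summable_pow_mul_geometric_of_norm_lt_one 1 (by simpa using hq)
    have h2 : Summable (fun n : ℕ => ‖q‖ ^ n) :=
      summable_geometric_of_lt_one (norm_nonneg _) hq
    simpa [add_mul, pow_one] using h1.add h2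
  apply Summable.of_norm_bounded (g := fun n : ℕ => (2 ^ N * ‖q‖) * (((n:ℝ) + 1) * ‖q‖ ^ n))
  · exact hgeo.mul_left _
  · intro n
    rw [norm_mul, norm_mul, norm_pow]
    have h1 : ‖qP (q ^ (n+2)) q N‖ ≤ 2 ^ N :=
      norm_qP_le (norm_qpow_le hq.le _) hq.le N
    have h2 : ‖(n:ℂ) + 1‖ = (n:ℝ) + 1 := by
      norm_cast
    rw [h2]
    calc ((n:ℝ) + 1) * ‖q‖ ^ (n+1) * ‖qP (q ^ (n+2)) q N‖
        ≤ ((n:ℝ) + 1) * ‖q‖ ^ (n+1) * 2 ^ N := by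
          apply mul_le_mul_of_nonneg_left h1 (by positivity)
      _ = 2 ^ N * ‖q‖ * (((n:ℝ) + 1) * ‖q‖ ^ n) := by ring

lemma CF {q : ℂ} (hq : ‖q‖ < 1) (hq0 : q ≠ 0) :
    ∀ (N : ℕ) (x : ℂ), ‖x‖ < 1 →
    ∑' k : ℕ, x ^ (k+1) * qP (q ^ (k+1)) q N = x * qP q q N / qP x q (N+1) := by
  intro N
  induction N with
  | zero =>
    intro x hx
    have h1 : ∀ k : ℕ, x ^ (k+1) * qP (q ^ (k+1)) q 0 = x * x ^ k := by
      intro k; rw [qP_zero]; ring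
    rw [tsum_congr h1, tsum_mul_left, tsum_geometric_of_norm_lt_one hx]
    have h2 : qP x q 1 = 1 - x := by rw [qP_succ, qP_zero]; simp
    rw [h2, qP_zero]
    rw [div_eq_mul_inv]
    ring
  | succ N ih =>
    intro x hx
    by_cases hx0 : x = 0
    · subst hx0
      simp
    have hxq : ‖x * q‖ < 1 := by
      rw [norm_mul]
      calc ‖x‖ * ‖q‖ ≤ ‖x‖ * 1 := mul_le_mul_of_nonneg_left hq.le (norm_nonneg _)
        _ = ‖x‖ := by ring
        _ < 1 := hx
    have hxq0 : x * q ≠ 0 := mul_ne_zero hx0 hq0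
    -- split the summand
    have hsplit : ∀ k : ℕ, x ^ (k+1) * qP (q ^ (k+1)) q (N+1) =
        x ^ (k+1) * qP (q ^ (k+2)) q N - (x*q) ^ (k+1) * qP (q ^ (k+2)) q N := by
      intro k
      have : qP (q ^ (k+1)) q (N+1) = (1 - q ^ (k+1)) * qP (q ^ (k+2)) q N := by
        rw [qP_succ', ← pow_succ]
      rw [this]
      ring
    rw [tsum_congr hsplit]
    have hf : Summable (fun k : ℕ => x ^ (k+1) * qP (q ^ (k+2)) q N) :=
      summable1 hx hq N (fun k => k + 2)
    have hg : Summable (fun k : ℕ => (x*q) ^ (k+1) * qP (q ^ (k+2)) q N) :=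
      summable1 hxq hq N (fun k => k + 2)
    rw [Summable.tsum_sub hf hg]
    -- shifted sums
    have hshift : ∀ (y : ℂ), ‖y‖ < 1 → y ≠ 0 →
        ∑' k : ℕ, y ^ (k+1) * qP (q ^ (k+2)) q N
          = y⁻¹ * (y * qP q q N / qP y q (N+1) - y * qP q q N) := by
      intro y hy hy0
      have hh : Summable (fun k : ℕ => y ^ (k+1) * qP (q ^ (k+1)) q N) :=
        summable1 hy hq N (fun k => k + 1)
      have e1 : ∑' k : ℕ, y ^ (k+1) * qP (q ^ (k+1)) q N
          = y ^ 1 * qP (q ^ 1) q N + ∑' k : ℕ, y ^ (k+2) * qP (q ^ (k+2)) q N := by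
        simpa using Summable.tsum_eq_zero_add hh
      have e2 : ∀ k : ℕ, y ^ (k+1) * qP (q ^ (k+2)) q N
          = y⁻¹ * (y ^ (k+2) * qP (q ^ (k+2)) q N) := by
        intro k
        field_simp
        ring
      rw [tsum_congr e2, tsum_mul_left]
      have e3 : ∑' k : ℕ, y ^ (k+2) * qP (q ^ (k+2)) q N
          = y * qP q q N / qP y q (N+1) - y * qP q q N := by
        have := ih y hy
        rw [e1] at this
        rw [← this]
        simp [pow_one]
      rw [e3]
    rw [hshift x hx hx0, hshift (x*q) hxq hxq0]
    have hE : qP (x*q) q N ≠ 0 := qP_ne_zero hxq hq.le N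
    have h1x : (1:ℂ) - x ≠ 0 := one_sub_ne_zero hx
    have hfac : (1:ℂ) - x*q*q^N ≠ 0 := by
      apply one_sub_ne_zero
      calc ‖x*q*q^N‖ = ‖x‖ * ‖q^(N+1)‖ := by
            rw [← norm_mul, mul_assoc, ← pow_succ']
      _ ≤ ‖x‖ * 1 := mul_le_mul_of_nonneg_left (norm_qpow_le hq.le _) (norm_nonneg _)
      _ = ‖x‖ := by ring
      _ < 1 := hx
    have eD1 : qP x q (N+1) = (1-x) * qP (x*q) q N := qP_succ' x q N
    have eD2 : qP (x*q) q (N+1) = qP (x*q) q N * (1 - x*q*q^N) := qP_succ (x*q) q N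
    have eD : qP x q (N+1+1) = (1-x) * (qP (x*q) q N * (1 - x*q*q^N)) := by
      rw [qP_succ' x q (N+1), eD2]
    have eP : qP q q (N+1) = qP q q N * (1 - q*q^N) := qP_succ q q N
    rw [eD1, eD2, eD, eP]
    field_simp
    ring

lemma sum_eq_u {q : ℂ} (hq : ‖q‖ < 1) (hq0 : q ≠ 0) (N : ℕ) :
    ∑ n ∈ Finset.Icc 1 N, q^n/(1-q^n) = ∑' k : ℕ, (1 - qP (q^(k+1)) q N) := by
  induction N with
  | zero => simp [qP_zero]
  | succ N ih =>
    rw [Finset.sum_Icc_succ_top (by omega : 1 ≤ N + 1), ih]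
    have hsplit : ∀ k : ℕ, (1 - qP (q^(k+1)) q (N+1))
        = (1 - qP (q^(k+1)) q N) + q^N * (q^(k+1) * qP (q^(k+1)) q N) := by
      intro k
      rw [qP_succ]
      ring
    rw [tsum_congr hsplit]
    have hs2 : Summable (fun k : ℕ => q^N * (q^(k+1) * qP (q^(k+1)) q N)) :=
      (summable1 hq hq N (fun k => k+1)).mul_left _
    rw [Summable.tsum_add (summable3 hq N) hs2, tsum_mul_left]
    rw [CF hq hq0 N q hq]
    have hP : qP q q N ≠ 0 := qP_ne_zero hq hq.le N
    have hP1 : qP q q (N+1) = qP q q N * (1 - q^(N+1)) := by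
      rw [qP_succ]
      ring_nf
    have hne : (1:ℂ) - q^(N+1) ≠ 0 := by
      apply one_sub_ne_zero
      rw [norm_pow]
      exact pow_lt_one₀ (norm_nonneg _) hq (by omega)
    rw [hP1]
    field_simp
    ring

lemma abel_identity (b : ℕ → ℂ) (M : ℕ) :
    ∑ n ∈ Finset.range M, ((n:ℂ)+1) * (b n - b (n+1))
      = (∑ n ∈ Finset.range M, b n) - (M:ℂ) * b M := by
  induction M with
  | zero => simp
  | succ M ih =>
    rw [Finset.sum_range_succ, ih, Finset.sum_range_succ]
    push_cast
    ring

lemma key2 {q : ℂ} (hq : ‖q‖ < 1) (M : ℕ) :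
    (1 - q^(M+1)) * ∑' n : ℕ, ((n:ℂ)+1) * q^(n+1) * qP (q^(n+2)) q M
      = ∑' k : ℕ, (1 - qP (q^(k+1)) q (M+1)) := by
  set c : ℂ := 1 - q^(M+1) with hc_def
  have hcpow : ‖q^(M+1)‖ < 1 := by
    rw [norm_pow]; exact pow_lt_one₀ (norm_nonneg _) hq (by omega)
  have hc : c ≠ 0 := one_sub_ne_zero hcpow
  set b : ℕ → ℂ := fun n => (1 - qP (q^(n+1)) q (M+1)) / c with hb_def
  have hab : ∀ n : ℕ, q^(n+1) * qP (q^(n+2)) q M = b n - b (n+1) := by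
    intro n
    rw [hb_def]
    simp only
    rw [div_sub_div_same]
    have e1 : qP (q^(n+1)) q (M+1) = (1 - q^(n+1)) * qP (q^(n+2)) q M := by
      rw [qP_succ', ← pow_succ]
    have e2 : qP (q^(n+2)) q (M+1) = qP (q^(n+2)) q M * (1 - q^(n+2) * q^M) := qP_succ _ _ _
    rw [e1, e2]
    field_simp
    ring
  -- summability of b
  have hb_sum : Summable b := by
    apply Summable.div_const (summable3 hq (M+1))
  -- the partial sums
  have hF : ∀ m : ℕ, ∑ n ∈ Finset.range m, ((n:ℂ)+1) * q^(n+1) * qP (q^(n+2)) q M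
      = (∑ n ∈ Finset.range m, b n) - (m:ℂ) * b m := by
    intro m
    rw [← abel_identity b m]
    apply Finset.sum_congr rfl
    intro n _
    rw [← hab n]
    ring
  -- limits
  have h1 : Tendsto (fun m : ℕ => ∑ n ∈ Finset.range m, ((n:ℂ)+1) * q^(n+1) * qP (q^(n+2)) q M)
      atTop (nhds (∑' n : ℕ, ((n:ℂ)+1) * q^(n+1) * qP (q^(n+2)) q M)) :=
    (summable2 hq M).hasSum.tendsto_sum_nat
  have h0 : Tendsto (fun m : ℕ => (m:ℂ) * b m) atTop (nhds 0) := by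
    have hcp : (0:ℝ) < ‖c‖ := norm_pos_iff.mpr hc
    have hg0 : Tendsto (fun m : ℕ => (m:ℝ) * ‖q‖^m) atTop (nhds 0) := by
      have := (summable_pow_mul_geometric_of_norm_lt_one 1
        (by simpa using hq) : Summable (fun m : ℕ => (m:ℝ)^1 * ‖q‖^m)).tendsto_atTop_zero
      simpa using this
    apply squeeze_zero_norm (a := fun m : ℕ => (2^(M+1) * ‖q‖ / ‖c‖) * ((m:ℝ) * ‖q‖^m)) ?_ ?_
    · intro m
      rw [norm_mul, Complex.norm_natCast]
      have hbm : ‖b m‖ ≤ 2^(M+1) * ‖q‖ / ‖c‖ * ‖q‖^m := by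
        rw [hb_def]
        simp only [norm_div]
        have h1 : ‖1 - qP (q^(m+1)) q (M+1)‖ ≤ 2^(M+1) * ‖q^(m+1)‖ :=
          norm_one_sub_qP_le (norm_qpow_le hq.le _) hq.le _
        calc ‖1 - qP (q^(m+1)) q (M+1)‖ / ‖c‖ ≤ (2^(M+1) * ‖q^(m+1)‖) / ‖c‖ := by gcongr
          _ = 2^(M+1) * ‖q‖ / ‖c‖ * ‖q‖^m := by rw [norm_pow, pow_succ]; ring
      calc (m:ℝ) * ‖b m‖ ≤ (m:ℝ) * (2^(M+1) * ‖q‖ / ‖c‖ * ‖q‖^m) :=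
            mul_le_mul_of_nonneg_left hbm (Nat.cast_nonneg m)
        _ = (2^(M+1) * ‖q‖ / ‖c‖) * ((m:ℝ) * ‖q‖^m) := by ring
    · simpa using hg0.const_mul (2^(M+1) * ‖q‖ / ‖c‖)
  have h2 : Tendsto (fun m : ℕ => (∑ n ∈ Finset.range m, b n) - (m:ℂ) * b m)
      atTop (nhds ((∑' n, b n) - 0)) :=
    (hb_sum.hasSum.tendsto_sum_nat).sub h0
  have hS : (∑' n : ℕ, ((n:ℂ)+1) * q^(n+1) * qP (q^(n+2)) q M) = (∑' n, b n) - 0 := by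
    apply tendsto_nhds_unique h1
    apply h2.congr
    intro m
    exact (hF m).symm
  rw [hS, sub_zero, hb_def]
  rw [tsum_div_const]
  field_simp

/-- Guo–Zeng's finite analogue of Uchimura's identity. -/
theorem stmt_1 (N : ℕ) (hN : 1 ≤ N) (q : ℂ) (hq : ‖q‖ < 1) :
    ∑ n ∈ Finset.Icc 1 N, q ^ n / (1 - q ^ n) =
      (∑' n : ℕ, ((n : ℂ) + 1) * q ^ (n + 1) * qP (q ^ (n + 2)) q (N - 1)) -
        ∑' n : ℕ, ((n : ℂ) + 1) * q ^ (n + 1 + N) * qP (q ^ (n + 2)) q (N - 1) := by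
  by_cases hq0 : q = 0
  · subst hq0
    have hL : ∑ n ∈ Finset.Icc 1 N, (0:ℂ) ^ n / (1 - (0:ℂ) ^ n) = 0 := by
      apply Finset.sum_eq_zero
      intro n hn
      have : 1 ≤ n := (Finset.mem_Icc.mp hn).1
      rw [zero_pow (by omega)]
      simp
    have h1 : ∀ n : ℕ, ((n:ℂ)+1) * (0:ℂ)^(n+1) * qP ((0:ℂ)^(n+2)) 0 (N-1) = 0 := by
      intro n; rw [zero_pow (by omega)]; ring
    have h2 : ∀ n : ℕ, ((n:ℂ)+1) * (0:ℂ)^(n+1+N) * qP ((0:ℂ)^(n+2)) 0 (N-1) = 0 := by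
      intro n; rw [zero_pow (by omega)]; ring
    rw [hL, tsum_congr h1, tsum_congr h2, tsum_zero]
    simp
  · obtain ⟨M, rfl⟩ : ∃ M, N = M + 1 := ⟨N - 1, by omega⟩
    simp only [Nat.add_sub_cancel]
    have e2 : ∀ n : ℕ, ((n:ℂ)+1) * q^(n+1+(M+1)) * qP (q^(n+2)) q M
        = q^(M+1) * (((n:ℂ)+1) * q^(n+1) * qP (q^(n+2)) q M) := by
      intro n; rw [pow_add]; ring
    rw [tsum_congr e2, tsum_mul_left]
    rw [sum_eq_u hq hq0 (M+1), ← key2 hq M]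
    ring
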